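/- Let E₁, E₀, F₀ be Banach spaces, U₁ ⊆ E₁ open, and Φ : U₁ × E₀ → F₀ a continuous map that is linear in the second variable. If S : E₁ → E₀ is a compact linear operator, then the map U₁ → L(E₁, F₀), x ↦ (ξ ↦ Φ(x, S ξ)), is continuous with respect to the operator norm topology on L(E₁, F₀). -/
import Mathlib

theorem stmt_11 {E₁ E₀ F₀ : Type*}
    [NormedAddCommGroup E₁] [NormedSpace ℝ E₁] [CompleteSpace E₁]
    [NormedAddCommGroup E₀] [NormedSpace ℝ E₀] [CompleteSpace E₀]
    [NormedAddCommGroup F₀] [NormedSpace ℝ F₀] [CompleteSpace F₀]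
    (U₁ : Set E₁) (hU : IsOpen U₁)
    (Φ : E₁ × E₀ → F₀) (hΦcont : ContinuousOn Φ (U₁ ×ˢ (Set.univ : Set E₀)))
    (hΦlin : ∀ x ∈ U₁, IsLinearMap ℝ fun ξ : E₀ => Φ (x, ξ))
    (S : E₁ →L[ℝ] E₀) (hS : IsCompactOperator S)
    (Ψ : E₁ → (E₁ →L[ℝ] F₀)) (hΨ : ∀ x ∈ U₁, ∀ ξ : E₁, Ψ x ξ = Φ (x, S ξ)) :
    ContinuousOn Ψ U₁ := by
  intro x₀ hx₀
  apply ContinuousAt.continuousWithinAt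
  rw [Metric.continuousAt_iff]
  intro ε hε
  -- K : compact set containing the image of the closed unit ball
  have hKc : IsCompact (closure (S '' Metric.closedBall 0 1)) :=
    IsCompactOperator.isCompact_closure_image_of_bounded (f := (S : E₁ →ₗ[ℝ] E₀)) hS
      Metric.isBounded_closedBall
  set K := closure (S '' Metric.closedBall 0 1) with hK
  -- the "difference" function
  set g : E₁ × E₀ → ℝ := fun p => ‖Φ p - Φ (x₀, p.2)‖ with hg
  have hgcont : ContinuousOn g (U₁ ×ˢ (Set.univ : Set E₀)) := by
    apply ContinuousOn.norm
    apply hΦcont.sub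
    apply hΦcont.comp (f := fun p : E₁ × E₀ => ((x₀, p.2) : E₁ × E₀))
    · exact (continuous_const.prodMk continuous_snd).continuousOn
    · intro p hp
      exact ⟨hx₀, Set.mem_univ _⟩
  -- open set where g < ε/2
  have hAopen : IsOpen ((U₁ ×ˢ (Set.univ : Set E₀)) ∩ g ⁻¹' Set.Iio (ε / 2)) :=
    hgcont.isOpen_inter_preimage (hU.prod isOpen_univ) isOpen_Iio
  have hsub : ({x₀} : Set E₁) ×ˢ K ⊆ (U₁ ×ˢ (Set.univ : Set E₀)) ∩ g ⁻¹' Set.Iio (ε / 2) := by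
    rintro ⟨x, y⟩ ⟨hx, hy⟩
    simp only [Set.mem_singleton_iff] at hx
    subst hx
    refine ⟨⟨hx₀, Set.mem_univ _⟩, ?_⟩
    simp only [Set.mem_preimage, Set.mem_Iio, hg, sub_self, norm_zero]
    linarith
  obtain ⟨V, W, hVopen, _, hxV, hKW, hVW⟩ :=
    generalized_tube_lemma isCompact_singleton hKc hAopen hsub
  have hVU : IsOpen (V ∩ U₁) := hVopen.inter hU
  have hxVU : x₀ ∈ V ∩ U₁ := ⟨hxV rfl, hx₀⟩
  obtain ⟨δ, hδpos, hδ⟩ := Metric.isOpen_iff.mp hVU x₀ hxVU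
  refine ⟨δ, hδpos, fun {x} hx => ?_⟩
  have hxmem : x ∈ V ∩ U₁ := hδ hx
  rw [dist_eq_norm]
  have hle : ‖Ψ x - Ψ x₀‖ ≤ ε / 2 := by
    apply ContinuousLinearMap.opNorm_le_of_unit_norm (by linarith)
    intro ξ hξ
    have hξK : S ξ ∈ K := subset_closure ⟨ξ, by simp [hξ], rfl⟩
    have := hVW (Set.mk_mem_prod hxmem.1 (hKW hξK))
    simp only [Set.mem_inter_iff, Set.mem_preimage, Set.mem_Iio, hg] at this
    rw [ContinuousLinearMap.sub_apply, hΨ x hxmem.2 ξ, hΨ x₀ hx₀ ξ]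
    exact le_of_lt this.2
  linarith
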